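/- Expected number of isolated nodes: In the homogeneous binary MAG model M(n;L), the expected number of isolated nodes is E[I_n(L)] = n Σ_{ℓ=0}^{L} C(L,ℓ) μ(1)^ℓ μ(0)^{L−ℓ} (1 − Γ(1)^ℓ Γ(0)^{L−ℓ})^{n−1}. -/

import Mathlib

open MeasureTheory Filter

/-- Bernoulli measure on `Bool` with parameter `p` = probability of `true`. -/
noncomputable def bern (p : ℝ) : Measure Bool :=
  (Real.toNNReal p) • Measure.dirac true + (Real.toNNReal (1 - p)) • Measure.dirac false

/-- Uniform distribution on `[0,1]`. -/
noncomputable def unif01 : Measure ℝ := MeasureTheory.volume.restrict (Set.Icc (0:ℝ) 1)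

/-- The probability space of the homogeneous binary MAG model `M(n;L)`:
i.i.d. Bernoulli attribute bits and, independently, i.i.d. Uniform(0,1) variables. -/
noncomputable def magMeasure (n L : ℕ) (p : ℝ) :
    Measure ((Fin n → Fin L → Bool) × (Fin n × Fin n → ℝ)) :=
  (Measure.pi fun _ : Fin n => Measure.pi fun _ : Fin L => bern p).prod
    (Measure.pi fun _ : Fin n × Fin n => unif01)

/-- `Q_L(a,b) = ∏_{ℓ} q(a_ℓ, b_ℓ)`. -/
def QL {L : ℕ} (q : Bool → Bool → ℝ) (a b : Fin L → Bool) : ℝ :=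
  ∏ ℓ : Fin L, q (a ℓ) (b ℓ)

/-- Distinct nodes `u, v` are adjacent iff `U(u,v) ≤ Q_L(A(u),A(v))`, where the uniform
variable attached to the unordered pair `{u,v}` is the one indexed by `(min u v, max u v)`. -/
def Adj {n L : ℕ} (q : Bool → Bool → ℝ)
    (ω : (Fin n → Fin L → Bool) × (Fin n × Fin n → ℝ)) (u v : Fin n) : Prop :=
  u ≠ v ∧ ω.2 (min u v, max u v) ≤ QL q (ω.1 u) (ω.1 v)

/-- Node `u` is isolated if it is adjacent to no other node. -/
def Isolated {n L : ℕ} (q : Bool → Bool → ℝ)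
    (ω : (Fin n → Fin L → Bool) × (Fin n × Fin n → ℝ)) (u : Fin n) : Prop :=
  ∀ v, ¬ Adj q ω u v

/-- `S_L(u)`: the number of attributes exhibited by node `u`. -/
def Scount {n L : ℕ} (ω : (Fin n → Fin L → Bool) × (Fin n × Fin n → ℝ)) (u : Fin n) : ℕ :=
  (Finset.univ.filter fun ℓ : Fin L => ω.1 u ℓ = true).card

open scoped Classical in
/-- `I_n(L)`: the number of isolated nodes. -/
noncomputable def numIsolated {n L : ℕ} (q : Bool → Bool → ℝ)
    (ω : (Fin n → Fin L → Bool) × (Fin n × Fin n → ℝ)) : ℕ :=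
  (Finset.univ.filter fun u : Fin n => Isolated q ω u).card

open scoped Classical in
/-- `I_n^{(k)}(L)`: the number of isolated nodes `u` with `S_L(u) = k`. -/
noncomputable def numIsolatedWith {n L : ℕ} (q : Bool → Bool → ℝ) (k : ℕ)
    (ω : (Fin n → Fin L → Bool) × (Fin n × Fin n → ℝ)) : ℕ :=
  (Finset.univ.filter fun u : Fin n => Isolated q ω u ∧ Scount ω u = k).card

open scoped Classical in
/-- `ξ^{(k)}(u)`: the indicator that node `u` is isolated and `S_L(u) = k`. -/
noncomputable def xiInd {n L : ℕ} (q : Bool → Bool → ℝ) (k : ℕ)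
    (ω : (Fin n → Fin L → Bool) × (Fin n × Fin n → ℝ)) (u : Fin n) : ℝ :=
  if Isolated q ω u ∧ Scount ω u = k then 1 else 0

/-- `Γ(a) = μ(0) q(a,0) + μ(1) q(a,1)`, with `μ(1) = μ1`, `μ(0) = 1 - μ1`. -/
def Gam (μ1 : ℝ) (q : Bool → Bool → ℝ) (a : Bool) : ℝ :=
  (1 - μ1) * q a false + μ1 * q a true

/-- A scaling `L : ℕ → ℕ` is `ρ`-admissible if `L_n ~ ρ ln n` as `n → ∞`. -/
def Admissible (ρ : ℝ) (L : ℕ → ℕ) : Prop :=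
  Asymptotics.IsEquivalent Filter.atTop (fun n => (L n : ℝ)) (fun n => ρ * Real.log n)

/-- `G(ν,μ) = (μ/ν)^ν ((1-μ)/(1-ν))^{1-ν}` (real powers; the conventions at `ν = 0,1`
agree with the continuous extension). -/
noncomputable def Gfun (ν μ : ℝ) : ℝ :=
  (μ / ν) ^ ν * ((1 - μ) / (1 - ν)) ^ (1 - ν)

/-- `Q*_L(a) = E[Q_L(a,A)]`, `A` a vector of `L` i.i.d. Bernoulli(μ1) bits. -/
noncomputable def Qstar {L : ℕ} (μ1 : ℝ) (q : Bool → Bool → ℝ) (a : Fin L → Bool) : ℝ :=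
  ∫ b, QL q a b ∂(Measure.pi fun _ : Fin L => bern μ1)

/-- `Q**_L(a,b) = E[Q_L(a,A) Q_L(b,A)]`. -/
noncomputable def Qstarstar {L : ℕ} (μ1 : ℝ) (q : Bool → Bool → ℝ) (a b : Fin L → Bool) : ℝ :=
  ∫ c, QL q a c * QL q b c ∂(Measure.pi fun _ : Fin L => bern μ1)

/-- `Q̃_L(a,b) = Q*_L(a) + Q*_L(b) − Q**_L(a,b)`. -/
noncomputable def Qtilde {L : ℕ} (μ1 : ℝ) (q : Bool → Bool → ℝ) (a b : Fin L → Bool) : ℝ :=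
  Qstar μ1 q a + Qstar μ1 q b - Qstarstar μ1 q a b

open Finset in
lemma bern_apply_singleton (p : ℝ) (b : Bool) :
    bern p {b} = ENNReal.ofReal (if b then p else 1 - p) := by
  cases b <;>
    simp [bern, Measure.dirac_apply, Set.indicator_apply, ENNReal.ofReal,
      smul_eq_mul, mul_one]

lemma bern_isProb {p : ℝ} (h0 : 0 ≤ p) (h1 : p ≤ 1) : IsProbabilityMeasure (bern p) := by
  constructor
  have huniv : (Set.univ : Set Bool) = {true} ∪ {false} := by
    ext b; cases b <;> simp
  have hdisj : Disjoint ({true} : Set Bool) {false} := by simp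
  rw [huniv, measure_union hdisj (measurableSet_singleton _),
    bern_apply_singleton, bern_apply_singleton]
  norm_num
  rw [← ENNReal.ofReal_add h0 (by linarith)]
  norm_num

instance : IsProbabilityMeasure unif01 := by
  constructor
  simp [unif01, Real.volume_Icc]

lemma unif01_Ioi {t : ℝ} (h0 : 0 ≤ t) (h1 : t ≤ 1) :
    unif01 (Set.Ioi t) = ENNReal.ofReal (1 - t) := by
  rw [unif01, Measure.restrict_apply measurableSet_Ioi]
  have h : Set.Ioi t ∩ Set.Icc 0 1 = Set.Ioc t 1 := by
    ext x
    simp only [Set.mem_inter_iff, Set.mem_Ioi, Set.mem_Icc, Set.mem_Ioc]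
    constructor
    · rintro ⟨h, _, h2⟩; exact ⟨h, h2⟩
    · rintro ⟨h, h2⟩; exact ⟨h, by linarith, h2⟩
  rw [h, Real.volume_Ioc]

lemma minmax_inj {n : ℕ} {u v v' : Fin n} (hv : v ≠ u) (hv' : v' ≠ u)
    (h : ((min u v, max u v) : Fin n × Fin n) = (min u v', max u v')) : v = v' := by
  have hmin : min u v = min u v' := congrArg Prod.fst h
  have hmax : max u v = max u v' := congrArg Prod.snd h
  rcases le_total u v with h1 | h1 <;> rcases le_total u v' with h2 | h2
  · rwa [max_eq_right h1, max_eq_right h2] at hmax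
  · rw [min_eq_left h1, min_eq_right h2] at hmin; exact absurd hmin.symm hv'
  · rw [min_eq_right h1, min_eq_left h2] at hmin; exact absurd hmin hv
  · rwa [min_eq_right h1, min_eq_right h2] at hmin

lemma QL_pos {L : ℕ} {q : Bool → Bool → ℝ} (hq : ∀ a b, 0 < q a b ∧ q a b < 1)
    (a b : Fin L → Bool) : 0 < QL q a b :=
  Finset.prod_pos fun _ _ => (hq _ _).1

lemma QL_le_one {L : ℕ} {q : Bool → Bool → ℝ} (hq : ∀ a b, 0 < q a b ∧ q a b < 1)
    (a b : Fin L → Bool) : QL q a b ≤ 1 :=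
  Finset.prod_le_one (fun _ _ => (hq _ _).1.le) (fun _ _ => (hq _ _).2.le)

lemma isolated_measurableSet {n L : ℕ} (q : Bool → Bool → ℝ) (u : Fin n) :
    MeasurableSet {ω : (Fin n → Fin L → Bool) × (Fin n × Fin n → ℝ) | Isolated q ω u} := by
  have h : {ω : (Fin n → Fin L → Bool) × (Fin n × Fin n → ℝ) | Isolated q ω u}
      = ⋂ v, {ω : (Fin n → Fin L → Bool) × (Fin n × Fin n → ℝ) | Adj q ω u v}ᶜ := by
    ext ω; simp [Isolated]
  rw [h]
  refine MeasurableSet.iInter fun v => (MeasurableSet.compl ?_)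
  have h2 : {ω : (Fin n → Fin L → Bool) × (Fin n × Fin n → ℝ) | Adj q ω u v}
      = {ω : (Fin n → Fin L → Bool) × (Fin n × Fin n → ℝ) | u ≠ v}
        ∩ {ω | ω.2 (min u v, max u v) ≤ QL q (ω.1 u) (ω.1 v)} := rfl
  rw [h2]
  refine MeasurableSet.inter ?_ ?_
  · by_cases h : u = v <;> simp [h]
  · refine measurableSet_le ?_ ?_
    · exact (measurable_pi_apply _).comp measurable_snd
    · have hm : Measurable (fun ω : (Fin n → Fin L → Bool) × (Fin n × Fin n → ℝ) =>
          (ω.1 u, ω.1 v)) :=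
        Measurable.prodMk ((measurable_pi_apply u).comp measurable_fst)
          ((measurable_pi_apply v).comp measurable_fst)
      exact (measurable_of_countable
        (fun p : (Fin L → Bool) × (Fin L → Bool) => QL q p.1 p.2)).comp hm
open Finset in
lemma measure_isolated_section {n L : ℕ} (q : Bool → Bool → ℝ)
    (hq : ∀ a b, 0 < q a b ∧ q a b < 1) (u : Fin n) (a : Fin n → Fin L → Bool) :
    (Measure.pi fun _ : Fin n × Fin n => unif01)
        {U : Fin n × Fin n → ℝ | Isolated q (a, U) u}
      = ∏ v ∈ Finset.univ.erase u, ENNReal.ofReal (1 - QL q (a u) (a v)) := by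
  classical
  set F : Fin n × Fin n → Set ℝ := fun p =>
    {x | ∀ v : Fin n, v ≠ u → ((min u v, max u v) : Fin n × Fin n) = p
      → QL q (a u) (a v) < x} with hF
  have hset : {U : Fin n × Fin n → ℝ | Isolated q (a, U) u} = Set.pi Set.univ F := by
    ext U
    simp only [Set.mem_setOf_eq, Set.mem_pi, Set.mem_univ, forall_true_left, Isolated, Adj,
      not_and, not_le, hF]
    constructor
    · intro h p v hvu hev
      subst hev
      exact h v (Ne.symm hvu)
    · intro h v huv
      exact h (min u v, max u v) v (Ne.symm huv) rfl
  rw [hset, Measure.pi_pi]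
  have hsub : ((Finset.univ.erase u).image
      (fun v : Fin n => ((min u v, max u v) : Fin n × Fin n))) ⊆ Finset.univ :=
    Finset.subset_univ _
  rw [← Finset.prod_subset hsub (fun p _ hp => ?_), Finset.prod_image (fun x hx y hy hxy => ?_),
    Finset.prod_congr rfl (fun v hv => ?_)]
  · -- F (min u v, max u v) = Ioi, apply unif01_Ioi
    have hvu : v ≠ u := (Finset.mem_erase.mp hv).1
    have hFe : F ((min u v, max u v)) = Set.Ioi (QL q (a u) (a v)) := by
      ext x
      simp only [hF, Set.mem_setOf_eq, Set.mem_Ioi]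
      constructor
      · intro h; exact h v hvu rfl
      · intro h v' hv' hev
        have hvv : v' = v := minmax_inj hv' hvu hev
        rwa [hvv]
    rw [hFe, unif01_Ioi (QL_pos hq _ _).le (QL_le_one hq _ _)]
  · exact minmax_inj (Finset.mem_erase.mp hx).1 (Finset.mem_erase.mp hy).1 hxy
  · -- outside image: F p = univ
    have hFu : F p = Set.univ := by
      ext x
      simp only [hF, Set.mem_setOf_eq, Set.mem_univ, iff_true]
      intro v hv hev
      exact absurd (Finset.mem_image.mpr ⟨v, Finset.mem_erase.mpr ⟨hv, Finset.mem_univ v⟩, hev⟩)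
        hp
    rw [hFu]
    exact measure_univ
open Finset in
lemma prod_ite_weight {L : ℕ} (x y : ℝ) (c : Fin L → Bool) :
    (∏ ℓ : Fin L, if c ℓ then x else y)
      = x ^ (Finset.univ.filter fun ℓ => c ℓ = true).card
        * y ^ (L - (Finset.univ.filter fun ℓ => c ℓ = true).card) := by
  classical
  rw [Finset.prod_ite (fun _ => x) (fun _ => y), Finset.prod_const, Finset.prod_const]
  congr 2
  have h := Finset.card_filter_add_card_filter_not
    (s := (Finset.univ : Finset (Fin L))) (p := fun ℓ => c ℓ = true)
  have h2 := Finset.card_filter_le (Finset.univ : Finset (Fin L)) (fun ℓ => c ℓ = true)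
  simp only [Finset.card_univ, Fintype.card_fin] at h h2
  omega

open Finset in
lemma card_filter_count {L : ℕ} (j : ℕ) :
    (Finset.univ.filter fun c : Fin L → Bool =>
        (Finset.univ.filter fun ℓ => c ℓ = true).card = j).card = L.choose j := by
  classical
  have : L.choose j = (Finset.powersetCard j (Finset.univ : Finset (Fin L))).card := by
    rw [Finset.card_powersetCard, Finset.card_univ, Fintype.card_fin]
  rw [this]
  refine Finset.card_bij (fun c _ => Finset.univ.filter fun ℓ => c ℓ = true) ?_ ?_ ?_
  · intro c hc
    refine Finset.mem_powersetCard.mpr ⟨Finset.filter_subset _ _, ?_⟩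
    exact (Finset.mem_filter.mp hc).2
  · intro c1 h1 c2 h2 h
    funext ℓ
    have hmem := Finset.ext_iff.mp h ℓ
    simp only [Finset.mem_filter, Finset.mem_univ, true_and] at hmem
    cases hc1 : c1 ℓ <;> cases hc2 : c2 ℓ
    · rfl
    · exact absurd (hmem.mpr hc2) (by simp [hc1])
    · exact absurd (hmem.mp hc1) (by simp [hc2])
    · rfl
  · intro s hs
    refine ⟨fun ℓ => decide (ℓ ∈ s), ?_, ?_⟩
    · have hcard := (Finset.mem_powersetCard.mp hs).2
      refine Finset.mem_filter.mpr ⟨Finset.mem_univ _, ?_⟩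
      rw [← hcard]
      congr 1
      ext ℓ
      simp
    · ext ℓ
      simp

open Finset in
lemma sum_bool_fun_eq_binom {L : ℕ} (f : ℕ → ℝ) :
    ∑ c : Fin L → Bool, f ((Finset.univ.filter fun ℓ => c ℓ = true).card)
      = ∑ j ∈ Finset.range (L + 1), (L.choose j : ℝ) * f j := by
  classical
  have hmaps : ∀ c : Fin L → Bool, c ∈ Finset.univ →
      (Finset.univ.filter fun ℓ => c ℓ = true).card ∈ Finset.range (L + 1) := by
    intro c _
    have h2 := Finset.card_filter_le (Finset.univ : Finset (Fin L)) (fun ℓ => c ℓ = true)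
    simp only [Finset.card_univ, Fintype.card_fin] at h2
    simp only [Finset.mem_range]
    omega
  rw [← Finset.sum_fiberwise_of_maps_to hmaps
    (fun c => f ((Finset.univ.filter fun ℓ => c ℓ = true).card))]
  refine Finset.sum_congr rfl fun j _ => ?_
  rw [Finset.sum_congr rfl (fun c hc => by rw [(Finset.mem_filter.mp hc).2]),
    Finset.sum_const, card_filter_count, nsmul_eq_mul]
set_option maxHeartbeats 1000000 in
theorem mag_expected_number_of_isolated_nodes
    (n L : ℕ) (hn : 2 ≤ n) (hL : 1 ≤ L)
    (μ1 : ℝ) (hμ1 : 0 < μ1) (hμ1' : μ1 < 1)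
    (q : Bool → Bool → ℝ) (hq : ∀ a b, 0 < q a b ∧ q a b < 1)
    (hqsym : q false true = q true false) :
    ∫ ω, (numIsolated q ω : ℝ) ∂(magMeasure n L μ1)
      = n * ∑ ℓ ∈ Finset.range (L + 1),
          (L.choose ℓ : ℝ) * μ1 ^ ℓ * (1 - μ1) ^ (L - ℓ) *
            (1 - Gam μ1 q true ^ ℓ * Gam μ1 q false ^ (L - ℓ)) ^ (n - 1) := by
  classical
  have hμ0 : (0:ℝ) ≤ 1 - μ1 := by linarith
  haveI hbP : IsProbabilityMeasure (bern μ1) := bern_isProb hμ1.le hμ1'.le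
  set ν : Measure (Fin L → Bool) := Measure.pi fun _ : Fin L => bern μ1 with hν
  set μA : Measure (Fin n → Fin L → Bool) := Measure.pi fun _ : Fin n => ν with hμA
  set μU : Measure (Fin n × Fin n → ℝ) := Measure.pi fun _ : Fin n × Fin n => unif01 with hμU
  haveI : IsProbabilityMeasure ν := by rw [hν]; infer_instance
  haveI : IsProbabilityMeasure μA := by rw [hμA]; infer_instance
  haveI : IsProbabilityMeasure μU := by rw [hμU]; infer_instance
  have hmag : magMeasure n L μ1 = μA.prod μU := rfl
  haveI : IsProbabilityMeasure (magMeasure n L μ1) := by rw [hmag]; infer_instance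
  set W : (Fin L → Bool) → ℝ := fun c => ∏ ℓ, (if c ℓ then μ1 else 1 - μ1) with hW
  have hνsing : ∀ c : Fin L → Bool, (ν {c}).toReal = W c := by
    intro c
    rw [hν, ← Set.univ_pi_singleton c, Measure.pi_pi, ENNReal.toReal_prod]
    refine Finset.prod_congr rfl fun ℓ _ => ?_
    rw [bern_apply_singleton,
      ENNReal.toReal_ofReal (by cases hc : c ℓ <;> simp [hc, hμ1.le, hμ0])]
  have hμAsing : ∀ a : Fin n → Fin L → Bool, (μA {a}).toReal = ∏ v, W (a v) := by
    intro a
    rw [hμA, ← Set.univ_pi_singleton a, Measure.pi_pi, ENNReal.toReal_prod]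
    exact Finset.prod_congr rfl fun v _ => hνsing (a v)
  have hInt : ∀ u : Fin n,
      Integrable (fun ω => if Isolated q ω u then (1:ℝ) else 0) (magMeasure n L μ1) := by
    intro u
    have hind : (fun ω : (Fin n → Fin L → Bool) × (Fin n × Fin n → ℝ) =>
        if Isolated q ω u then (1:ℝ) else 0)
        = Set.indicator {ω | Isolated q ω u} (fun _ => (1:ℝ)) := by
      funext ω; simp [Set.indicator_apply]
    rw [hind]
    exact (integrable_const 1).indicator (isolated_measurableSet q u)
  -- per-node computation
  have hstep : ∀ u : Fin n,
      ∫ ω, (if Isolated q ω u then (1:ℝ) else 0) ∂(magMeasure n L μ1)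
        = ∑ c : Fin L → Bool, W c * (1 - ∏ ℓ, Gam μ1 q (c ℓ)) ^ (n - 1) := by
    intro u
    have hib := hInt u
    rw [hmag] at hib ⊢
    rw [MeasureTheory.integral_prod _ hib]
    have hinner : ∀ a : Fin n → Fin L → Bool,
        ∫ U, (if Isolated q (a, U) u then (1:ℝ) else 0) ∂μU
          = ∏ v ∈ Finset.univ.erase u, (1 - QL q (a u) (a v)) := by
      intro a
      have hs : MeasurableSet {U : Fin n × Fin n → ℝ | Isolated q (a, U) u} :=
        MeasurableSet.preimage (isolated_measurableSet q u) measurable_prodMk_left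
      have h1 : (fun U => if Isolated q (a, U) u then (1:ℝ) else 0)
          = Set.indicator {U : Fin n × Fin n → ℝ | Isolated q (a, U) u} (fun _ => (1:ℝ)) := by
        funext U; simp [Set.indicator_apply]
      rw [h1, MeasureTheory.integral_indicator hs, setIntegral_const, smul_eq_mul, mul_one, hμU, measureReal_def,
        measure_isolated_section q hq u a, ENNReal.toReal_prod]
      exact Finset.prod_congr rfl fun v _ =>
        ENNReal.toReal_ofReal (by linarith [QL_le_one hq (a u) (a v)])
    rw [MeasureTheory.integral_fintype Integrable.of_finite]
    simp only [smul_eq_mul, measureReal_def]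
    rw [Finset.sum_congr rfl (fun a _ => by rw [hμAsing a, hinner a])]
    -- pure algebra from here
    set g : (Fin L → Bool) → (Fin L → Bool) → ℝ := fun c x => 1 - QL q c x with hg
    have hcollapse : ∀ a : Fin n → Fin L → Bool,
        (∏ v, W (a v)) * ∏ v ∈ Finset.univ.erase u, g (a u) (a v)
          = ∑ c : Fin L → Bool, ∏ v : Fin n,
              (if v = u then (if a v = c then W (a v) else 0) else W (a v) * g c (a v)) := by
      intro a
      have h1 : ∀ c : Fin L → Bool,
          (∏ v : Fin n,
              (if v = u then (if a v = c then W (a v) else 0) else W (a v) * g c (a v)))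
            = if a u = c then
                W (a u) * ∏ v ∈ Finset.univ.erase u, (W (a v) * g c (a v)) else 0 := by
        intro c
        rw [← Finset.mul_prod_erase Finset.univ _ (Finset.mem_univ u)]
        have h2 : (∏ v ∈ Finset.univ.erase u,
            (if v = u then (if a v = c then W (a v) else 0) else W (a v) * g c (a v)))
              = ∏ v ∈ Finset.univ.erase u, (W (a v) * g c (a v)) :=
          Finset.prod_congr rfl fun v hv => by rw [if_neg (Finset.mem_erase.mp hv).1]
        rw [h2, if_pos rfl]
        by_cases h : a u = c
        · simp [h]
        · simp [h]
      rw [Finset.sum_congr rfl fun c _ => h1 c, Finset.sum_ite_eq Finset.univ (a u)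
        (fun c => W (a u) * ∏ v ∈ Finset.univ.erase u, (W (a v) * g c (a v))),
        if_pos (Finset.mem_univ _), Finset.prod_mul_distrib, ← mul_assoc,
        Finset.mul_prod_erase Finset.univ (fun v => W (a v)) (Finset.mem_univ u)]
    rw [Finset.sum_congr rfl fun a _ => hcollapse a, Finset.sum_comm]
    refine Finset.sum_congr rfl fun c _ => ?_
    rw [← Fintype.prod_sum
      (fun (v : Fin n) (x : Fin L → Bool) =>
        if v = u then (if x = c then W x else 0) else W x * g c x)]
    rw [← Finset.mul_prod_erase Finset.univ _ (Finset.mem_univ u)]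
    have hsumS : (∑ x : Fin L → Bool, W x * g c x) = 1 - ∏ ℓ, Gam μ1 q (c ℓ) := by
      have hsum1 : (∑ x : Fin L → Bool, W x) = 1 := by
        simp only [hW]
        rw [← Fintype.prod_sum (fun (ℓ : Fin L) (b : Bool) => if b then μ1 else 1 - μ1)]
        have hone : ∀ ℓ : Fin L, (∑ b : Bool, if b then μ1 else 1 - μ1) = 1 := by
          intro ℓ
          rw [Fintype.sum_bool]
          show μ1 + (1 - μ1) = 1
          ring
        rw [Finset.prod_congr rfl fun ℓ _ => hone ℓ, Finset.prod_const_one]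
      have hsum2 : (∑ x : Fin L → Bool, W x * QL q c x) = ∏ ℓ, Gam μ1 q (c ℓ) := by
        have hx : ∀ x : Fin L → Bool, W x * QL q c x
            = ∏ ℓ, ((if x ℓ then μ1 else 1 - μ1) * q (c ℓ) (x ℓ)) := by
          intro x; simp only [hW]; rw [QL, ← Finset.prod_mul_distrib]
        rw [Finset.sum_congr rfl fun x _ => hx x,
          ← Fintype.prod_sum (fun (ℓ : Fin L) (b : Bool) => (if b then μ1 else 1 - μ1) * q (c ℓ) b)]
        refine Finset.prod_congr rfl fun ℓ _ => ?_
        rw [Fintype.sum_bool]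
        show μ1 * q (c ℓ) true + (1 - μ1) * q (c ℓ) false = Gam μ1 q (c ℓ)
        simp only [Gam]
        ring
      calc (∑ x : Fin L → Bool, W x * g c x)
          = ∑ x : Fin L → Bool, (W x - W x * QL q c x) := by
            refine Finset.sum_congr rfl fun x _ => ?_
            rw [hg]; ring
        _ = 1 - ∏ ℓ, Gam μ1 q (c ℓ) := by
            rw [Finset.sum_sub_distrib, hsum1, hsum2]
    have hu : (∑ x : Fin L → Bool,
        if u = u then (if x = c then W x else 0) else W x * g c x) = W c := by
      have hux : ∀ x : Fin L → Bool,
          (if u = u then (if x = c then W x else 0) else W x * g c x)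
            = if x = c then W x else 0 := fun x => if_pos rfl
      rw [Finset.sum_congr rfl fun x _ => hux x,
        Finset.sum_ite_eq' Finset.univ c W, if_pos (Finset.mem_univ _)]
    have hvv : ∀ v ∈ Finset.univ.erase u,
        (∑ x : Fin L → Bool, if v = u then (if x = c then W x else 0) else W x * g c x)
          = 1 - ∏ ℓ, Gam μ1 q (c ℓ) := by
      intro v hvmem
      simp only [if_neg (Finset.mem_erase.mp hvmem).1]
      exact hsumS
    rw [hu, Finset.prod_congr rfl hvv, Finset.prod_const,
      Finset.card_erase_of_mem (Finset.mem_univ u), Finset.card_univ, Fintype.card_fin]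
  -- assemble
  have hNum : ∀ ω : (Fin n → Fin L → Bool) × (Fin n × Fin n → ℝ),
      ((numIsolated q ω : ℝ)) = ∑ u : Fin n, (if Isolated q ω u then (1:ℝ) else 0) := by
    intro ω
    rw [numIsolated, Finset.card_filter]
    push_cast
    exact Finset.sum_congr rfl fun u _ => by split_ifs <;> simp
  simp only [hNum]
  rw [MeasureTheory.integral_finset_sum _ (fun u _ => hInt u)]
  simp only [hstep]
  rw [Finset.sum_const, Finset.card_univ, Fintype.card_fin, nsmul_eq_mul]
  congr 1
  have hterm : ∀ c : Fin L → Bool,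
      W c * (1 - ∏ ℓ, Gam μ1 q (c ℓ)) ^ (n - 1)
        = (fun j => μ1 ^ j * (1 - μ1) ^ (L - j)
            * (1 - Gam μ1 q true ^ j * Gam μ1 q false ^ (L - j)) ^ (n - 1))
          ((Finset.univ.filter fun ℓ => c ℓ = true).card) := by
    intro c
    simp only
    have hGamprod : (∏ ℓ, Gam μ1 q (c ℓ))
        = Gam μ1 q true ^ (Finset.univ.filter fun ℓ => c ℓ = true).card
          * Gam μ1 q false ^ (L - (Finset.univ.filter fun ℓ => c ℓ = true).card) := by
      have hGc : ∀ ℓ : Fin L, Gam μ1 q (c ℓ) = if c ℓ then Gam μ1 q true else Gam μ1 q false := by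
        intro ℓ; cases hc : c ℓ <;> simp [hc]
      rw [Finset.prod_congr rfl fun ℓ _ => hGc ℓ, prod_ite_weight]
    simp only [hW]
    rw [prod_ite_weight, hGamprod]
  calc (∑ c : Fin L → Bool, W c * (1 - ∏ ℓ, Gam μ1 q (c ℓ)) ^ (n - 1))
      = ∑ c : Fin L → Bool,
          (fun j => μ1 ^ j * (1 - μ1) ^ (L - j)
            * (1 - Gam μ1 q true ^ j * Gam μ1 q false ^ (L - j)) ^ (n - 1))
          ((Finset.univ.filter fun ℓ => c ℓ = true).card) :=
        Finset.sum_congr rfl fun c _ => hterm c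
    _ = ∑ j ∈ Finset.range (L + 1), (L.choose j : ℝ)
          * (μ1 ^ j * (1 - μ1) ^ (L - j)
            * (1 - Gam μ1 q true ^ j * Gam μ1 q false ^ (L - j)) ^ (n - 1)) :=
        sum_bool_fun_eq_binom (fun j => μ1 ^ j * (1 - μ1) ^ (L - j)
          * (1 - Gam μ1 q true ^ j * Gam μ1 q false ^ (L - j)) ^ (n - 1))
    _ = ∑ ℓ ∈ Finset.range (L + 1),
          (L.choose ℓ : ℝ) * μ1 ^ ℓ * (1 - μ1) ^ (L - ℓ) *
            (1 - Gam μ1 q true ^ ℓ * Gam μ1 q false ^ (L - ℓ)) ^ (n - 1) :=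
        Finset.sum_congr rfl fun j _ => by ring
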